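/- For every FLIF expression α, every instance D, and (ν₁, ν₂) ∈ ⟦α⟧_D: if ν₁′ is a valuation agreeing with ν₁ on the syntactic input set I(α), then there exists ν₂′ agreeing with ν₂ on O(α) such that (ν₁′, ν₂′) ∈ ⟦α⟧_D. (Input-output determinacy.) -/
import Mathlib


/-- FLIF expressions over relation names `ρ`, variables `V`, and domain `D`. -/
inductive FLIF (ρ V D : Type) : Type
  | rel (R : ρ) (xs ys : List V)
  | eqVar (x y : V)
  | eqConst (x : V) (c : D)
  | assignVar (x y : V)
  | assignConst (x : V) (c : D)
  | comp (a b : FLIF ρ V D)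
  | union (a b : FLIF ρ V D)
  | diff (a b : FLIF ρ V D)

namespace FLIF

variable {ρ V D : Type}

/-- Dynamic semantics of FLIF: a binary relation on valuations `V → D`,
given a database instance `I` assigning to each relation name a set of tuples. -/
def sem (I : ρ → Set (List D)) [DecidableEq V] : FLIF ρ V D → (V → D) → (V → D) → Prop
  | rel R xs ys, ν₁, ν₂ =>
      (xs.map ν₁ ++ ys.map ν₂) ∈ I R ∧ ∀ v : V, v ∉ ys → ν₁ v = ν₂ v
  | eqVar x y, ν₁, ν₂ => ν₁ = ν₂ ∧ ν₁ x = ν₁ y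
  | eqConst x c, ν₁, ν₂ => ν₁ = ν₂ ∧ ν₁ x = c
  | assignVar x y, ν₁, ν₂ => ν₂ = Function.update ν₁ x (ν₁ y)
  | assignConst x c, ν₁, ν₂ => ν₂ = Function.update ν₁ x c
  | comp a b, ν₁, ν₂ => ∃ ν, sem I a ν₁ ν ∧ sem I b ν ν₂
  | union a b, ν₁, ν₂ => sem I a ν₁ ν₂ ∨ sem I b ν₁ ν₂
  | diff a b, ν₁, ν₂ => sem I a ν₁ ν₂ ∧ ¬ sem I b ν₁ ν₂

variable [DecidableEq V]

/-- Syntactic output variables `O(α)`. -/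
def outs : FLIF ρ V D → Finset V
  | rel _ _ ys => ys.toFinset
  | eqVar _ _ => ∅
  | eqConst _ _ => ∅
  | assignVar x _ => {x}
  | assignConst x _ => {x}
  | comp a b => outs a ∪ outs b
  | union a b => outs a ∪ outs b
  | diff a _ => outs a

/-- Syntactic input variables `I(α)`. -/
def inps : FLIF ρ V D → Finset V
  | rel _ xs _ => xs.toFinset
  | eqVar x y => {x, y}
  | eqConst x _ => {x}
  | assignVar _ y => {y}
  | assignConst _ _ => ∅
  | comp a b => inps a ∪ (inps b \ outs a)
  | union a b => inps a ∪ inps b ∪ symmDiff (outs a) (outs b)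
  | diff a b => inps a ∪ inps b ∪ symmDiff (outs a) (outs b)

/-- Free variables of an expression: `vars(α) = I(α) ∪ O(α)`. -/
def vars (α : FLIF ρ V D) : Finset V := inps α ∪ outs α

/-- `α` is io-disjoint: every subexpression `β` of `α` (including `α` itself)
satisfies `I(β) ∩ O(β) = ∅`. -/
def ioDisjoint : FLIF ρ V D → Prop
  | comp a b => ioDisjoint a ∧ ioDisjoint b ∧ inps (comp a b) ∩ outs (comp a b) = ∅
  | union a b => ioDisjoint a ∧ ioDisjoint b ∧ inps (union a b) ∩ outs (union a b) = ∅
  | diff a b => ioDisjoint a ∧ ioDisjoint b ∧ inps (diff a b) ∩ outs (diff a b) = ∅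
  | α => inps α ∩ outs α = ∅

theorem inertia (I : ρ → Set (List D)) (α : FLIF ρ V D) {ν₁ ν₂ : V → D}
    (h : sem I α ν₁ ν₂) : ∀ v ∉ outs α, ν₁ v = ν₂ v := by
  induction α generalizing ν₁ ν₂ with
  | rel R xs ys => intro v hv; exact h.2 v (by simpa [outs] using hv)
  | eqVar x y => intro v hv; rw [h.1]
  | eqConst x c => intro v hv; rw [h.1]
  | assignVar x y =>
      intro v hv; rw [h]; simp [outs] at hv; simp [Function.update, hv]
  | assignConst x c =>
      intro v hv; rw [h]; simp [outs] at hv; simp [Function.update, hv]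
  | comp a b iha ihb =>
      intro v hv
      obtain ⟨ν, ha, hb⟩ := h
      simp [outs] at hv
      rw [iha ha v hv.1, ihb hb v hv.2]
  | union a b iha ihb =>
      intro v hv; simp [outs] at hv
      cases h with
      | inl h => exact iha h v hv.1
      | inr h => exact ihb h v hv.2
  | diff a b iha ihb =>
      intro v hv; exact iha h.1 v (by simpa [outs] using hv)

theorem det (I : ρ → Set (List D)) (α : FLIF ρ V D) {ν₁ ν₂ : V → D} (ν₁' : V → D)
    (h : sem I α ν₁ ν₂) (h₁ : ∀ v ∈ inps α, ν₁' v = ν₁ v) :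
    sem I α ν₁' (fun v => if v ∈ outs α then ν₂ v else ν₁' v) := by
  induction α generalizing ν₁ ν₂ ν₁' with
  | rel R xs ys =>
      constructor
      · have hx : xs.map ν₁' = xs.map ν₁ :=
          List.map_congr_left fun x hx => h₁ x (by simpa [inps] using hx)
        have hy : ys.map (fun v : V => if v ∈ outs (rel (D := D) R xs ys) then ν₂ v else ν₁' v)
            = ys.map ν₂ :=
          List.map_congr_left fun y hy => by simp [outs, hy]
        rw [hx, hy]; exact h.1
      · intro v hv
        simp [outs, hv]
  | eqVar x y =>
      refine ⟨by funext v; simp [outs], ?_⟩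
      rw [h₁ x (by simp [inps]), h₁ y (by simp [inps])]
      exact h.2
  | eqConst x c =>
      refine ⟨by funext v; simp [outs], ?_⟩
      rw [h₁ x (by simp [inps])]
      exact h.2
  | assignVar x y =>
      show _ = _
      funext v
      simp only [outs, Finset.mem_singleton, Function.update]
      by_cases hvx : v = x
      · subst hvx
        simp only [if_pos rfl]
        rw [h, h₁ y (by simp [inps])]
        simp [Function.update]
      · simp [hvx]
  | assignConst x c =>
      show _ = _
      funext v
      simp only [outs, Finset.mem_singleton, Function.update]
      by_cases hvx : v = x
      · subst hvx
        simp only [if_pos rfl]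
        rw [h]
        simp [Function.update]
      · simp [hvx]
  | comp a b iha ihb =>
      obtain ⟨ν, ha, hb⟩ := h
      have h₁a : ∀ v ∈ inps a, ν₁' v = ν₁ v := fun v hv =>
        h₁ v (by simp [inps, hv])
      have ha' := iha ν₁' ha h₁a
      set μ : V → D := fun v => if v ∈ outs a then ν v else ν₁' v with hμ
      have h₁b : ∀ v ∈ inps b, μ v = ν v := by
        intro v hv
        by_cases hva : v ∈ outs a
        · simp [hμ, hva]
        · have : v ∈ inps (comp a b) := by simp [inps, hv, hva]
          simp only [hμ, if_neg hva]
          rw [h₁ v this, inertia I a ha v hva]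
      have hb' := ihb μ hb h₁b
      refine ⟨μ, ha', ?_⟩
      have : (fun v => if v ∈ outs b then ν₂ v else μ v)
          = fun v => if v ∈ outs (comp a b) then ν₂ v else ν₁' v := by
        funext v
        by_cases hvb : v ∈ outs b
        · simp [outs, hvb]
        · by_cases hva : v ∈ outs a
          · simp only [if_neg hvb, hμ, if_pos hva]
            rw [inertia I b hb v hvb]
            simp [outs, hva]
          · simp [outs, hμ, hva, hvb]
      rwa [this] at hb'
  | union a b iha ihb =>
      cases h with
      | inl h =>
          left
          have ha' := iha ν₁' h (fun v hv => h₁ v (by simp [inps, hv]))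
          have : (fun v => if v ∈ outs a then ν₂ v else ν₁' v)
              = fun v => if v ∈ outs (union a b) then ν₂ v else ν₁' v := by
            funext v
            by_cases hva : v ∈ outs a
            · simp [outs, hva]
            · by_cases hvb : v ∈ outs b
              · have hvi : v ∈ inps (union a b) := by
                  simp [inps, Finset.mem_symmDiff, hva, hvb]
                simp only [if_neg hva, outs, Finset.mem_union]
                rw [h₁ v hvi, inertia I a h v hva]
                simp [hvb]
              · simp [outs, hva, hvb]
          rwa [this] at ha'
      | inr h =>
          right
          have hb' := ihb ν₁' h (fun v hv => h₁ v (by simp [inps, hv]))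
          have : (fun v => if v ∈ outs b then ν₂ v else ν₁' v)
              = fun v => if v ∈ outs (union a b) then ν₂ v else ν₁' v := by
            funext v
            by_cases hvb : v ∈ outs b
            · simp [outs, hvb]
            · by_cases hva : v ∈ outs a
              · have hvi : v ∈ inps (union a b) := by
                  simp [inps, Finset.mem_symmDiff, hva, hvb]
                simp only [if_neg hvb, outs, Finset.mem_union]
                rw [h₁ v hvi, inertia I b h v hvb]
                simp [hva]
              · simp [outs, hva, hvb]
          rwa [this] at hb'
  | diff a b iha ihb =>
      obtain ⟨ha, hnb⟩ := h
      have houts : outs (diff a b) = outs a := rfl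
      have ha' := iha ν₁' ha (fun v hv => h₁ v (by simp [inps, hv]))
      rw [houts]
      refine ⟨ha', ?_⟩
      intro hb'
      apply hnb
      set ν₂' : V → D := fun v => if v ∈ outs a then ν₂ v else ν₁' v with hν₂'
      have h₁b : ∀ v ∈ inps b, ν₁ v = ν₁' v := fun v hv =>
        (h₁ v (by simp [inps, hv])).symm
      have hb'' := ihb ν₁ hb' h₁b
      have : (fun v => if v ∈ outs b then ν₂' v else ν₁ v) = ν₂ := by
        funext v
        by_cases hvb : v ∈ outs b
        · simp only [if_pos hvb, hν₂']
          by_cases hva : v ∈ outs a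
          · simp [hva]
          · have hvi : v ∈ inps (diff a b) := by
              simp [inps, Finset.mem_symmDiff, hva, hvb]
            simp only [if_neg hva]
            rw [h₁ v hvi, inertia I a ha v hva]
        · simp only [if_neg hvb]
          by_cases hva : v ∈ outs a
          · have hvi : v ∈ inps (diff a b) := by
              simp [inps, Finset.mem_symmDiff, hva, hvb]
            have h1 := inertia I b hb' v hvb
            have h2 : ν₂' v = ν₂ v := by simp [hν₂', hva]
            rw [← h₁ v hvi, h1, h2]
          · exact inertia I a ha v hva
      rwa [this] at hb''

end FLIF

/-- **Input-output determinacy.** The values of the input variables determine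
the values of the output variables. -/
theorem input_output_determinacy {ρ V D : Type} [DecidableEq V] (I : ρ → Set (List D))
    (α : FLIF ρ V D) (ν₁ ν₂ ν₁' : V → D)
    (h : FLIF.sem I α ν₁ ν₂)
    (h₁ : ∀ v ∈ FLIF.inps α, ν₁' v = ν₁ v) :
    ∃ ν₂' : V → D, (∀ v ∈ FLIF.outs α, ν₂' v = ν₂ v) ∧ FLIF.sem I α ν₁' ν₂' := by
  exact ⟨fun v => if v ∈ FLIF.outs α then ν₂ v else ν₁' v,
    fun v hv => by simp [hv], FLIF.det I α ν₁' h h₁⟩
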